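/- Let H be a 3-partite 3-uniform hypergraph with parts V_R, V_B, V_G, let t ≤ τ(H), let T be a set of t vertices, and let A be one of the three parts. Then there exists a set F of τ(H) − t edges of H, each disjoint from T, such that any two distinct edges in F intersect only inside A. -/

import Mathlib

/-- Membership of a vertex in an edge of a 3-partite 3-uniform hypergraph. -/
def Mem3 {R B G : Type*} (v : R ⊕ B ⊕ G) (e : R × B × G) : Prop :=
  match v with
  | Sum.inl r => e.1 = r
  | Sum.inr (Sum.inl b) => e.2.1 = b
  | Sum.inr (Sum.inr g) => e.2.2 = g

/-- The cover number τ of a 3-partite 3-uniform hypergraph with edge set `E`. -/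
noncomputable def coverNum3 {R B G : Type*} (E : Set (R × B × G)) : ℕ :=
  sInf {n | ∃ S : Finset (R ⊕ B ⊕ G), S.card = n ∧ ∀ e ∈ E, ∃ v ∈ S, Mem3 v e}

/-- `OnlyIn a e f`: the edges `e` and `f` intersect only inside part `a`
(where `a = 0, 1, 2` indexes the parts R, B, G): in every other part their
vertices differ. -/
def OnlyIn {R B G : Type*} (a : Fin 3) (e f : R × B × G) : Prop :=
  (a ≠ 0 → e.1 ≠ f.1) ∧ (a ≠ 1 → e.2.1 ≠ f.2.1) ∧ (a ≠ 2 → e.2.2 ≠ f.2.2)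

/-- König's theorem: a finite bipartite graph has a matching `M` and a vertex
cover `Ca ∪ Cb` with `|Ca| + |Cb| ≤ |M|`. -/
lemma konig3 {α β : Type*} [Fintype α] (P : Finset (α × β)) :
    ∃ (M : Finset (α × β)) (Ca : Finset α) (Cb : Finset β),
      M ⊆ P ∧ (∀ e ∈ M, ∀ f ∈ M, e ≠ f → e.1 ≠ f.1 ∧ e.2 ≠ f.2) ∧
      (∀ e ∈ P, e.1 ∈ Ca ∨ e.2 ∈ Cb) ∧ Ca.card + Cb.card ≤ M.card := by
  classical
  rcases P.eq_empty_or_nonempty with rfl | ⟨e0, he0⟩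
  · exact ⟨∅, ∅, ∅, by simp, by simp, by simp, by simp⟩
  set N : Finset α → Finset β := fun S => (P.filter (fun e => e.1 ∈ S)).image Prod.snd with hN
  set vals : Finset ℕ :=
    (Finset.univ : Finset α).powerset.image (fun S => S.card - (N S).card) with hvals
  have hvne : vals.Nonempty := ⟨(∅ : Finset α).card - (N ∅).card,
    Finset.mem_image_of_mem _ (by simp)⟩
  set d : ℕ := vals.max' hvne with hd
  have hd_ge : ∀ S : Finset α, S.card - (N S).card ≤ d := by
    intro S
    apply Finset.le_max'
    rw [hvals]
    exact Finset.mem_image_of_mem _ (Finset.mem_powerset.2 (Finset.subset_univ S))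
  -- Hall's theorem with `d` dummy vertices
  set t : α → Finset (β ⊕ Fin d) := fun x =>
    ((N {x}).image Sum.inl) ∪ ((Finset.univ : Finset (Fin d)).image Sum.inr) with ht
  have hNmem : ∀ (S : Finset α) (y : β), y ∈ N S ↔ ∃ e ∈ P, e.1 ∈ S ∧ e.2 = y := by
    intro S y
    rw [hN]
    simp only [Finset.mem_image, Finset.mem_filter]
    constructor
    · rintro ⟨e, ⟨h1, h2⟩, h3⟩; exact ⟨e, h1, h2, h3⟩
    · rintro ⟨e, h1, h2, h3⟩; exact ⟨e, ⟨h1, h2⟩, h3⟩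
  have hall : ∀ s : Finset α, s.card ≤ (s.biUnion t).card := by
    intro s
    rcases s.eq_empty_or_nonempty with rfl | ⟨x0, hx0⟩
    · simp
    have hbu : s.biUnion t =
        ((N s).image Sum.inl) ∪ ((Finset.univ : Finset (Fin d)).image Sum.inr) := by
      ext v
      simp only [Finset.mem_biUnion, ht, Finset.mem_union, Finset.mem_image]
      constructor
      · rintro ⟨x, hx, (⟨y, hy, rfl⟩ | ⟨j, hj, rfl⟩)⟩
        · left
          refine ⟨y, ?_, rfl⟩
          rw [hNmem] at hy ⊢
          obtain ⟨e, h1, h2, h3⟩ := hy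
          exact ⟨e, h1, (Finset.mem_singleton.1 h2) ▸ hx, h3⟩
        · exact Or.inr ⟨j, Finset.mem_univ j, rfl⟩
      · rintro (⟨y, hy, rfl⟩ | ⟨j, hj, rfl⟩)
        · rw [hNmem] at hy
          obtain ⟨e, h1, h2, h3⟩ := hy
          refine ⟨e.1, h2, Or.inl ⟨y, ?_, rfl⟩⟩
          rw [hNmem]
          exact ⟨e, h1, Finset.mem_singleton_self _, h3⟩
        · exact ⟨x0, hx0, Or.inr ⟨j, Finset.mem_univ j, rfl⟩⟩
    rw [hbu, Finset.card_union_of_disjoint (by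
      simp [Finset.disjoint_left]), Finset.card_image_of_injective _ Sum.inl_injective,
      Finset.card_image_of_injective _ Sum.inr_injective, Finset.card_univ, Fintype.card_fin]
    have := hd_ge s
    omega
  obtain ⟨f, hfinj, hft⟩ := (Finset.all_card_le_biUnion_card_iff_exists_injective t).1 hall
  -- the matching
  set gb : β ⊕ Fin d → β := Sum.elim id (fun _ => e0.2) with hgb
  set fL : Finset α := Finset.univ.filter (fun x => (f x).isLeft) with hfL
  set M : Finset (α × β) := fL.image (fun x => (x, gb (f x))) with hM
  have hfLspec : ∀ x ∈ fL, f x = Sum.inl (gb (f x)) := by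
    intro x hx
    rw [hfL, Finset.mem_filter] at hx
    rcases hfx : f x with y | j
    · simp [hgb]
    · rw [hfx] at hx; simp at hx
  have hMP : ∀ x ∈ fL, (x, gb (f x)) ∈ P := by
    intro x hx
    have h1 := hft x
    rw [hfLspec x hx, ht] at h1
    simp only [Finset.mem_union, Finset.mem_image] at h1
    rcases h1 with ⟨y, hy, hyy⟩ | ⟨j, _, hj⟩
    · rw [hNmem] at hy
      obtain ⟨e, h1, h2, h3⟩ := hy
      have hx1 : e.1 = x := Finset.mem_singleton.1 h2
      have hy2 : y = gb (f x) := Sum.inl_injective hyy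
      have : e = (x, gb (f x)) := Prod.ext hx1 (h3.trans hy2)
      exact this ▸ h1
    · exact absurd hj (by simp)
  have hMcardfL : M.card = fL.card := by
    rw [hM]
    apply Finset.card_image_of_injOn
    intro a _ b _ hab
    exact congrArg Prod.fst hab
  -- |fL| ≥ |α| - d
  set fR : Finset α := Finset.univ.filter (fun x => ¬ (f x).isLeft) with hfR
  have hsplit : fL.card + fR.card = Fintype.card α := by
    rw [hfL, hfR]
    exact Finset.card_filter_add_card_filter_not _
  have hfRd : fR.card ≤ d := by
    have : fR.card ≤ (Finset.univ.image (Sum.inr : Fin d → β ⊕ Fin d)).card := by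
      apply Finset.card_le_card_of_injOn f
      · intro x hx
        rw [hfR, Finset.mem_coe, Finset.mem_filter] at hx
        have h1 := hft x
        rw [ht] at h1
        simp only [Finset.mem_union] at h1
        rcases h1 with h1 | h1
        · exfalso
          obtain ⟨y, _, hy⟩ := Finset.mem_image.1 h1
          rw [← hy] at hx
          simp at hx
        · exact h1
      · exact fun a _ b _ h => hfinj h
    rwa [Finset.card_image_of_injective _ Sum.inr_injective, Finset.card_univ,
      Fintype.card_fin] at this
  -- the matching properties
  have hMsub : M ⊆ P := by
    intro e he
    rw [hM] at he
    obtain ⟨x, hx, rfl⟩ := Finset.mem_image.1 he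
    exact hMP x hx
  have hMmatch : ∀ e ∈ M, ∀ g ∈ M, e ≠ g → e.1 ≠ g.1 ∧ e.2 ≠ g.2 := by
    intro e he g hg hne
    rw [hM] at he hg
    obtain ⟨x, hx, rfl⟩ := Finset.mem_image.1 he
    obtain ⟨x', hx', rfl⟩ := Finset.mem_image.1 hg
    have hxx : x ≠ x' := fun h => hne (by rw [h])
    refine ⟨hxx, fun h => hxx ?_⟩
    apply hfinj
    rw [hfLspec x hx, hfLspec x' hx']
    exact congrArg Sum.inl h
  -- the cover
  by_cases hd0 : d = 0
  · refine ⟨M, Finset.univ, ∅, hMsub, hMmatch, fun e _ => Or.inl (Finset.mem_univ _), ?_⟩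
    rw [Finset.card_univ, Finset.card_empty, hMcardfL]
    omega
  · obtain ⟨S, _, hS⟩ := Finset.mem_image.1 (hvals ▸ (hd ▸ vals.max'_mem hvne))
    refine ⟨M, Finset.univ \ S, N S, hMsub, hMmatch, ?_, ?_⟩
    · intro e he
      by_cases h1 : e.1 ∈ S
      · exact Or.inr ((hNmem S e.2).2 ⟨e, he, h1, rfl⟩)
      · exact Or.inl (Finset.mem_sdiff.2 ⟨Finset.mem_univ _, h1⟩)
    · rw [Finset.card_sdiff_of_subset (Finset.subset_univ S), Finset.card_univ, hMcardfL]
      have h1 : S.card ≤ Fintype.card α := by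
        rw [← Finset.card_univ]; exact Finset.card_le_card (Finset.subset_univ S)
      omega

lemma aux3 {R B G β γ : Type*} [Fintype R] [Fintype B] [Fintype G] [Fintype β]
    (E : Set (R × B × G)) (T : Finset (R ⊕ B ⊕ G))
    (p : R × B × G → β × γ) (i1 : β → R ⊕ B ⊕ G) (i2 : γ → R ⊕ B ⊕ G)
    (hm1 : ∀ e, Mem3 (i1 (p e).1) e) (hm2 : ∀ e, Mem3 (i2 (p e).2) e) :
    ∃ F : Finset (R × B × G), F.card = coverNum3 E - T.card ∧ (↑F : Set _) ⊆ E ∧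
      (∀ e ∈ F, ∀ v ∈ T, ¬ Mem3 v e) ∧
      ∀ e ∈ F, ∀ f ∈ F, e ≠ f → (p e).1 ≠ (p f).1 ∧ (p e).2 ≠ (p f).2 := by
  classical
  set PT : Finset (R × B × G) :=
    Finset.univ.filter (fun e => e ∈ E ∧ ∀ v ∈ T, ¬ Mem3 v e) with hPT
  have hPTmem : ∀ e, e ∈ PT ↔ (e ∈ E ∧ ∀ v ∈ T, ¬ Mem3 v e) := by
    intro e; rw [hPT, Finset.mem_filter]; simp
  rcases PT.eq_empty_or_nonempty with hemp | ⟨e0, he0⟩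
  · -- T itself covers E
    have hcov : coverNum3 E ≤ T.card := by
      apply Nat.sInf_le
      refine ⟨T, rfl, fun e he => ?_⟩
      by_contra hc
      push_neg at hc
      have : e ∈ PT := (hPTmem e).2 ⟨he, fun v hv hm => hc v hv hm⟩
      rw [hemp] at this
      exact absurd this (Finset.notMem_empty e)
    exact ⟨∅, by simp [Nat.sub_eq_zero_of_le hcov], by simp, by simp, by simp⟩
  obtain ⟨M, Ca, Cb, hMP, hmatch, hcovP, hcard⟩ := konig3 (PT.image p)
  -- the cover of E built from T, Ca, Cb
  have hk : coverNum3 E ≤ T.card + (Ca.card + Cb.card) := by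
    have h1 : coverNum3 E ≤ (T ∪ Ca.image i1 ∪ Cb.image i2).card := by
      apply Nat.sInf_le
      refine ⟨_, rfl, fun e he => ?_⟩
      by_cases hav : ∀ v ∈ T, ¬ Mem3 v e
      · have hePT : e ∈ PT := (hPTmem e).2 ⟨he, hav⟩
        rcases hcovP (p e) (Finset.mem_image_of_mem p hePT) with h | h
        · exact ⟨i1 (p e).1, by
            simp only [Finset.mem_union]
            exact Or.inl (Or.inr (Finset.mem_image_of_mem i1 h)), hm1 e⟩
        · exact ⟨i2 (p e).2, by
            simp only [Finset.mem_union]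
            exact Or.inr (Finset.mem_image_of_mem i2 h), hm2 e⟩
      · push_neg at hav
        obtain ⟨v, hv, hmv⟩ := hav
        exact ⟨v, by simp only [Finset.mem_union]; exact Or.inl (Or.inl hv), hmv⟩
    have h2 : (T ∪ Ca.image i1 ∪ Cb.image i2).card ≤ T.card + (Ca.card + Cb.card) := by
      calc (T ∪ Ca.image i1 ∪ Cb.image i2).card
          ≤ (T ∪ Ca.image i1).card + (Cb.image i2).card := Finset.card_union_le _ _
        _ ≤ T.card + (Ca.image i1).card + (Cb.image i2).card := by
            have := Finset.card_union_le T (Ca.image i1); omega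
        _ ≤ T.card + (Ca.card + Cb.card) := by
            have := Finset.card_image_le (s := Ca) (f := i1)
            have := Finset.card_image_le (s := Cb) (f := i2)
            omega
    exact h1.trans h2
  -- lift the matching
  set c : β × γ → R × B × G := fun m =>
    if h : ∃ e, e ∈ PT ∧ p e = m then h.choose else e0 with hc
  have hcspec : ∀ m ∈ M, c m ∈ PT ∧ p (c m) = m := by
    intro m hm
    obtain ⟨e, he, hpe⟩ := Finset.mem_image.1 (hMP hm)
    have hex : ∃ e, e ∈ PT ∧ p e = m := ⟨e, he, hpe⟩
    rw [hc]
    simp only [dif_pos hex]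
    exact hex.choose_spec
  set F0 : Finset (R × B × G) := M.image c with hF0
  have hinj : Set.InjOn c ↑M := by
    intro m hm m' hm' h
    rw [← (hcspec m hm).2, ← (hcspec m' hm').2, h]
  have hF0card : F0.card = M.card := Finset.card_image_of_injOn hinj
  have hMk : coverNum3 E - T.card ≤ F0.card := by
    rw [hF0card]; omega
  obtain ⟨F, hFsub, hFcard⟩ := F0.exists_subset_card_eq hMk
  refine ⟨F, hFcard, ?_, ?_, ?_⟩
  · intro e he
    obtain ⟨m, hm, rfl⟩ := Finset.mem_image.1 (hFsub he)
    exact ((hPTmem _).1 (hcspec m hm).1).1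
  · intro e he v hv
    obtain ⟨m, hm, rfl⟩ := Finset.mem_image.1 (hFsub (by exact_mod_cast he))
    exact ((hPTmem _).1 (hcspec m hm).1).2 v hv
  · intro e he f hf hne
    obtain ⟨m, hm, rfl⟩ := Finset.mem_image.1 (hFsub he)
    obtain ⟨m', hm', rfl⟩ := Finset.mem_image.1 (hFsub hf)
    have hmm : m ≠ m' := fun h => hne (by rw [h])
    have h := hmatch m hm m' hm' hmm
    rw [(hcspec m hm).2, (hcspec m' hm').2]
    exact h

theorem stmt_9 {R B G : Type*} [Fintype R] [Fintype B] [Fintype G]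
    (E : Set (R × B × G)) (T : Finset (R ⊕ B ⊕ G)) (hT : T.card ≤ coverNum3 E)
    (a : Fin 3) :
    ∃ F : Finset (R × B × G), F.card = coverNum3 E - T.card ∧ (↑F : Set _) ⊆ E ∧
      (∀ e ∈ F, ∀ v ∈ T, ¬ Mem3 v e) ∧
      ∀ e ∈ F, ∀ f ∈ F, e ≠ f → OnlyIn a e f := by
  fin_cases a
  · obtain ⟨F, h1, h2, h3, h4⟩ := aux3 E T (fun e => (e.2.1, e.2.2))
      (Sum.inr ∘ Sum.inl) (Sum.inr ∘ Sum.inr) (fun e => rfl) (fun e => rfl)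
    refine ⟨F, h1, h2, h3, fun e he f hf hne => ?_⟩
    obtain ⟨ha, hb⟩ := h4 e he f hf hne
    exact ⟨fun h => absurd rfl h, fun _ => ha, fun _ => hb⟩
  · obtain ⟨F, h1, h2, h3, h4⟩ := aux3 E T (fun e => (e.1, e.2.2))
      Sum.inl (Sum.inr ∘ Sum.inr) (fun e => rfl) (fun e => rfl)
    refine ⟨F, h1, h2, h3, fun e he f hf hne => ?_⟩
    obtain ⟨ha, hb⟩ := h4 e he f hf hne
    exact ⟨fun _ => ha, fun h => absurd rfl h, fun _ => hb⟩
  · obtain ⟨F, h1, h2, h3, h4⟩ := aux3 E T (fun e => (e.1, e.2.1))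
      Sum.inl (Sum.inr ∘ Sum.inl) (fun e => rfl) (fun e => rfl)
    refine ⟨F, h1, h2, h3, fun e he f hf hne => ?_⟩
    obtain ⟨ha, hb⟩ := h4 e he f hf hne
    exact ⟨fun _ => ha, fun _ => hb, fun h => absurd rfl h⟩
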